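/- Comparison with the Ornstein–Uhlenbeck path: let y₀, b, σ > 0, let B : [0,∞) → ℝ be continuous with B(0) = 0, and let ε > 0. Suppose Y : [0,∞) → ℝ is continuous, strictly positive, and solves E(ε), and suppose U : [0,∞) → ℝ is continuous and satisfies U(t) = y₀ − (b/2)·∫₀ᵗ U(s) ds + (σ/2)·B(t) for all t ≥ 0. Then Y(t) ≥ U(t) for all t ≥ 0. -/

import Mathlib

/-- A continuous, strictly positive `Y : [0, ∞) → ℝ` solves the singular equation `E(ε)`
if `Y t = y₀ + (1/2) ∫₀ᵗ (ε / Y s - b * Y s) ds + (σ/2) B t` for all `t ≥ 0`. -/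
def SolvesE (y₀ b σ : ℝ) (B : ℝ → ℝ) (ε : ℝ) (Y : ℝ → ℝ) : Prop :=
  ContinuousOn Y (Set.Ici 0) ∧ (∀ t, 0 ≤ t → 0 < Y t) ∧
    ∀ t, 0 ≤ t →
      Y t = y₀ + (1 / 2) * (∫ s in (0:ℝ)..t, (ε / Y s - b * Y s)) + (σ / 2) * B t

/-- Comparison with the Ornstein–Uhlenbeck path: a solution of `E(ε)` dominates
the OU path driven by the same noise path. -/
theorem stmt_3 (y₀ b σ : ℝ) (hy₀ : 0 < y₀) (hb : 0 < b) (hσ : 0 < σ)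
    (B : ℝ → ℝ) (hBc : ContinuousOn B (Set.Ici 0)) (hB0 : B 0 = 0)
    (ε : ℝ) (hε : 0 < ε)
    (Y : ℝ → ℝ) (hY : SolvesE y₀ b σ B ε Y)
    (U : ℝ → ℝ) (hUc : ContinuousOn U (Set.Ici 0))
    (hU : ∀ t, 0 ≤ t →
      U t = y₀ - (b / 2) * (∫ s in (0:ℝ)..t, U s) + (σ / 2) * B t) :
    ∀ t, 0 ≤ t → U t ≤ Y t := by
  obtain ⟨hYc, hYpos, hYeq⟩ := hY
  set f : ℝ → ℝ := fun s => ε / (2 * Y s) - b / 2 * (Y s - U s) with hfdef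
  have hfc : ContinuousOn f (Set.Ici 0) := by
    apply ContinuousOn.sub
    · exact continuousOn_const.div (continuousOn_const.mul hYc)
        (fun s hs => by have := hYpos s hs; positivity)
    · exact continuousOn_const.mul (hYc.sub hUc)
  set F : ℝ → ℝ := fun t => ∫ s in (0:ℝ)..t, f s with hFdef
  -- integrability helpers
  have huIcc : ∀ t : ℝ, 0 ≤ t → Set.uIcc (0:ℝ) t ⊆ Set.Ici 0 := by
    intro t ht
    rw [Set.uIcc_of_le ht]
    exact Set.Icc_subset_Ici_self
  have hYint : ∀ t : ℝ, 0 ≤ t →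
      IntervalIntegrable (fun s => ε / Y s - b * Y s) MeasureTheory.volume 0 t := by
    intro t ht
    apply ContinuousOn.intervalIntegrable
    apply ContinuousOn.sub
    · exact continuousOn_const.div (hYc.mono (huIcc t ht))
        (fun s hs => (hYpos s (huIcc t ht hs)).ne')
    · exact continuousOn_const.mul (hYc.mono (huIcc t ht))
  have hUint : ∀ t : ℝ, 0 ≤ t → IntervalIntegrable U MeasureTheory.volume 0 t :=
    fun t ht => (hUc.mono (huIcc t ht)).intervalIntegrable
  have hfint : ∀ t : ℝ, 0 ≤ t → IntervalIntegrable f MeasureTheory.volume 0 t :=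
    fun t ht => (hfc.mono (huIcc t ht)).intervalIntegrable
  -- D = Y - U equals F on [0, ∞)
  have hDeq : ∀ t, 0 ≤ t → Y t - U t = F t := by
    intro t ht
    have key : F t = (1 / 2) * (∫ s in (0:ℝ)..t, (ε / Y s - b * Y s))
        + (b / 2) * (∫ s in (0:ℝ)..t, U s) := by
      rw [← intervalIntegral.integral_const_mul, ← intervalIntegral.integral_const_mul,
        ← intervalIntegral.integral_add ((hYint t ht).const_mul _) ((hUint t ht).const_mul _)]
      apply intervalIntegral.integral_congr
      intro s hs
      have hs0 : 0 ≤ s := (huIcc t ht hs).out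
      have hYs := hYpos s hs0
      simp only [hfdef]
      field_simp
      ring
    rw [hYeq t ht, hU t ht, key]
    ring
  -- the auxiliary function g
  set g : ℝ → ℝ := fun t => Real.exp (b / 2 * t) * F t with hgdef
  have hg0 : g 0 = 0 := by simp [hgdef, hFdef]
  -- g has positive derivative on (0, ∞)
  have hgderiv : ∀ x : ℝ, 0 < x →
      HasDerivAt g (Real.exp (b / 2 * x) * (ε / (2 * Y x))) x := by
    intro x hx
    have hmem : Set.Ici (0:ℝ) ∈ nhds x := Ici_mem_nhds hx
    have hcontAt : ContinuousAt f x := hfc.continuousAt hmem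
    have hmeas : StronglyMeasurableAtFilter f (nhds x) MeasureTheory.volume :=
      ContinuousOn.stronglyMeasurableAtFilter isOpen_Ioi
        (hfc.mono Set.Ioi_subset_Ici_self) x hx
    have hF' : HasDerivAt F (f x) x :=
      intervalIntegral.integral_hasDerivAt_right (hfint x hx.le) hmeas hcontAt
    have hexp : HasDerivAt (fun t => Real.exp (b / 2 * t)) (Real.exp (b / 2 * x) * (b / 2)) x := by
      have h1 : HasDerivAt (fun t : ℝ => b / 2 * t) (b / 2) x := by
        simpa using (hasDerivAt_id x).const_mul (b / 2)
      exact (Real.hasDerivAt_exp _).comp x h1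
    have := hexp.mul hF'
    refine HasDerivAt.congr_deriv this ?_
    have hFx : F x = Y x - U x := (hDeq x hx.le).symm
    rw [hFx, hfdef]
    ring
  -- F t ≥ 0 for t ≥ 0
  intro t ht
  have hFt : 0 ≤ F t := by
    rcases eq_or_lt_of_le ht with h | h
    · simp [hFdef, ← h]
    · have hgc : ContinuousOn g (Set.Icc 0 t) := by
        apply ContinuousOn.mul
        · exact (Real.continuous_exp.comp (continuous_const.mul continuous_id)).continuousOn
        · have : ContinuousOn F (Set.uIcc 0 t) :=
            intervalIntegral.continuousOn_primitive_interval
              ((hfc.mono (huIcc t ht)).integrableOn_compact isCompact_uIcc)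
          rwa [Set.uIcc_of_le ht] at this
      have hmono : StrictMonoOn g (Set.Icc 0 t) := by
        apply strictMonoOn_of_deriv_pos (convex_Icc 0 t) hgc
        intro x hx
        rw [interior_Icc] at hx
        rw [(hgderiv x hx.1).deriv]
        have := hYpos x hx.1.le
        positivity
      have : g 0 < g t := hmono (Set.left_mem_Icc.2 ht) (Set.right_mem_Icc.2 ht) h
      rw [hg0] at this
      simp only [hgdef] at this
      have hexp : 0 < Real.exp (b / 2 * t) := Real.exp_pos _
      nlinarith [this]
  have := hDeq t ht
  linarith
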